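/- Let S be a bounded invertible operator on a complex Hilbert space with σ(S) contained in the sector {re^{it} : r > 0, |t| < π/2}, and let P, Q be bounded operators with P² = Q² = S and σ(P), σ(Q) both contained in the sector {re^{it} : r > 0, |t| < π/4}. Then P = Q. -/

import Mathlib

open ContinuousLinearMap

noncomputable instance myElemNCR {A : Type*} [NormedRing A] [NormedAlgebra ℂ A] (a : A) :
    NormedCommRing (Algebra.elemental ℂ a) :=
  { SubringClass.toNormedRing (Algebra.elemental ℂ a) with mul_comm := mul_comm }

section Aux

variable {A : Type*} [NormedRing A] [NormedAlgebra ℂ A] [CompleteSpace A]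

lemma my_intertwine_exp (a b d : A) (h : a * d = d * b) :
    NormedSpace.exp a * d = d * NormedSpace.exp b := by
  have hpow : ∀ n : ℕ, a ^ n * d = d * b ^ n := by
    intro n; induction n with
    | zero => simp
    | succ n ih => rw [pow_succ, pow_succ, mul_assoc, h, ← mul_assoc, ih, mul_assoc]
  simp only [NormedSpace.exp_eq_tsum ℂ]
  rw [← (NormedSpace.expSeries_summable' (𝕂 := ℂ) a).tsum_mul_right d,
      ← (NormedSpace.expSeries_summable' (𝕂 := ℂ) b).tsum_mul_left d]
  refine tsum_congr fun n => ?_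
  rw [smul_mul_assoc, mul_smul_comm, hpow]

lemma my_exists_pos_re_bound (a : A) (h : ∀ z ∈ spectrum ℂ a, z ≠ 0 ∧ |z.arg| < Real.pi / 4) :
    ∃ δ : ℝ, 0 < δ ∧ ∀ z ∈ spectrum ℂ a, δ ≤ z.re := by
  have hre : ∀ z ∈ spectrum ℂ a, 0 < z.re := by
    intro z hz
    obtain ⟨h0, harg⟩ := h z hz
    have h2 : |z.arg| < Real.pi / 2 := lt_trans harg (by linarith [Real.pi_pos])
    rcases Complex.abs_arg_lt_pi_div_two_iff.mp h2 with h' | h'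
    · exact h'
    · exact absurd h' h0
  rcases (spectrum ℂ a).eq_empty_or_nonempty with he | hne
  · exact ⟨1, one_pos, by simp [he]⟩
  · obtain ⟨z₀, hz₀, hmin⟩ :=
      (spectrum.isCompact a).exists_isMinOn hne Complex.continuous_re.continuousOn
    exact ⟨z₀.re, hre z₀ hz₀, fun z hz => hmin hz⟩

lemma my_elemental_spectrum_re [NormOneClass A] (a : A) (δ : ℝ)
    (hδ : ∀ z ∈ spectrum ℂ a, δ ≤ z.re) {z : ℂ} (hz : z.re < δ) :
    z ∉ spectrum ℂ (⟨a, Algebra.elemental.self_mem ℂ a⟩ : Algebra.elemental ℂ a) := by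
  set B := Algebra.elemental ℂ a with hB
  set b : B := ⟨a, Algebra.elemental.self_mem ℂ a⟩ with hb
  haveI : NormOneClass B := ⟨by
    change ‖((1 : B) : A)‖ = 1
    rw [OneMemClass.coe_one]; exact norm_one⟩
  set C : Set ℂ := {w | w.re < δ} with hC
  have hCopen : IsOpen C := isOpen_lt Complex.continuous_re continuous_const
  have hCpre : IsPreconnected C := (convex_halfSpace_re_lt δ).isPreconnected
  have hCres : ∀ w ∈ C, IsUnit (algebraMap ℂ A w - a) := by
    intro w hw
    by_contra h
    exact absurd (hδ w (spectrum.mem_iff.mpr h)) (not_le.mpr hw)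
  set g : ℂ → A := fun w => Ring.inverse (algebraMap ℂ A w - a) with hg
  set V : Set ℂ := {w | w ∈ C ∧ w ∈ resolventSet ℂ b} with hV
  have hcoe : ∀ w : ℂ, ((algebraMap ℂ B w - b : B) : A) = algebraMap ℂ A w - a := by
    intro w
    push_cast
    rfl
  have hVmem : ∀ w ∈ C, (w ∈ resolventSet ℂ b ↔ g w ∈ B) := by
    intro w hw
    constructor
    · rintro ⟨u, hu⟩
      set u' : Aˣ := Units.map (B.val : B →* A) u with hu'
      have hcu : (u' : A) = algebraMap ℂ A w - a := by
        rw [hu']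
        show ((u : B) : A) = _
        rw [hu, hcoe]
      have : g w = ((u'⁻¹ : Aˣ) : A) := by
        rw [hg]; dsimp only
        rw [← hcu, Ring.inverse_unit]
      rw [this, ← map_inv (Units.map (B.val : B →* A))]
      · exact Subtype.mem _
    · intro hgB
      have hunit : IsUnit (algebraMap ℂ A w - a) := hCres w hw
      have h1 : (algebraMap ℂ A w - a) * g w = 1 := Ring.mul_inverse_cancel _ hunit
      have h2 : g w * (algebraMap ℂ A w - a) = 1 := Ring.inverse_mul_cancel _ hunit
      refine ⟨⟨algebraMap ℂ B w - b, ⟨g w, hgB⟩, ?_, ?_⟩, rfl⟩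
      · exact Subtype.ext (by rw [MulMemClass.coe_mul, hcoe]; exact h1)
      · exact Subtype.ext (by rw [MulMemClass.coe_mul, hcoe]; exact h2)
  have hVclosed : C ∩ closure V ⊆ V := by
    rintro w ⟨hwC, hwcl⟩
    have hg_cont : ContinuousWithinAt g V w := by
      have hc : ContinuousAt (fun w : ℂ => algebraMap ℂ A w - a) w :=
        ((continuous_algebraMap ℂ A).sub continuous_const).continuousAt
      have h1 : ContinuousAt Ring.inverse ((algebraMap ℂ A) w - a) := by
        simpa using NormedRing.inverse_continuousAt (hCres w hwC).unit
      exact (ContinuousAt.comp (g := Ring.inverse)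
        (f := fun w : ℂ => algebraMap ℂ A w - a) (x := w) h1 hc).continuousWithinAt
    have hmem : g w ∈ closure (g '' V) := hg_cont.mem_closure_image hwcl
    have hgB : g w ∈ B := by
      have hsub : g '' V ⊆ (B : Set A) := by
        rintro _ ⟨w', hw', rfl⟩
        exact (hVmem w' hw'.1).mp hw'.2
      exact (IsClosed.closure_subset_iff (Algebra.elemental.isClosed ℂ a)).mpr hsub hmem
    exact ⟨hwC, (hVmem w hwC).mpr hgB⟩
  have hVne : V.Nonempty := by
    refine ⟨((-(‖b‖ + |δ| + 1) : ℝ) : ℂ), ?_, ?_⟩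
    · show (((-(‖b‖ + |δ| + 1) : ℝ) : ℂ)).re < δ
      rw [Complex.ofReal_re]
      have : (0:ℝ) ≤ ‖b‖ := norm_nonneg _
      have := neg_abs_le δ
      linarith
    · by_contra hres
      have hmem : ((-(‖b‖ + |δ| + 1) : ℝ) : ℂ) ∈ spectrum ℂ b := hres
      have hle := spectrum.norm_le_norm_of_mem hmem
      rw [Complex.norm_real, Real.norm_eq_abs, abs_neg, abs_of_nonneg (by positivity)] at hle
      have := abs_nonneg δ
      linarith
  have hVC : C ⊆ V := by
    by_contra hnot
    rw [Set.not_subset] at hnot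
    obtain ⟨w₁, hw₁C, hw₁V⟩ := hnot
    have hVopen : IsOpen V := by
      have : V = C ∩ resolventSet ℂ b := rfl
      rw [this]
      exact hCopen.inter (spectrum.isOpen_resolventSet b)
    obtain ⟨x, hxC, hxV, hxcl⟩ :=
      hCpre V (closure V)ᶜ hVopen (isClosed_closure.isOpen_compl)
        (fun w hw => by
          by_cases hcl : w ∈ closure V
          · exact Or.inl (hVclosed ⟨hw, hcl⟩)
          · exact Or.inr hcl)
        ⟨hVne.choose, hVne.choose_spec.1, hVne.choose_spec⟩
        ⟨w₁, hw₁C, fun hcl => hw₁V (hVclosed ⟨hw₁C, hcl⟩)⟩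
    exact hxcl (subset_closure hxV)
  exact fun hzspec => hzspec (hVC hz).2

lemma my_eventually_norm_lt [NormOneClass A] (a : A) (δ : ℝ) (hδpos : 0 < δ)
    (hδ : ∀ z ∈ spectrum ℂ a, δ ≤ z.re) :
    ∀ᶠ n : ℕ in Filter.atTop, ‖(NormedSpace.exp (-a)) ^ n‖ < 1 := by
  set B := Algebra.elemental ℂ a with hB
  set b : B := ⟨a, Algebra.elemental.self_mem ℂ a⟩ with hb
  letI : NormedAlgebra ℚ A := .restrictScalars ℚ ℂ A
  letI : NormedAlgebra ℚ B := .restrictScalars ℚ ℂ B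
  set e : B := NormedSpace.exp (-b) with he
  have hcoe_e : (e : A) = NormedSpace.exp (-a) := by
    rw [he, show ((NormedSpace.exp (-b) : B) : A) = B.val (NormedSpace.exp (-b)) from rfl,
        NormedSpace.map_exp B.val (continuous_subtype_val : Continuous ((↑) : B → A)), map_neg]
    rfl
  set r : NNReal := (Real.exp (-δ)).toNNReal with hr
  have hspec : ∀ z ∈ spectrum ℂ e, (‖z‖₊ : ENNReal) ≤ (r : ENNReal) := by
    intro z hz
    obtain ⟨f, hf⟩ := WeakDual.CharacterSpace.mem_spectrum_iff_exists.mp hz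
    have hfb : δ ≤ (f b).re := by
      by_contra hlt
      exact my_elemental_spectrum_re a δ hδ (not_le.mp hlt) (AlgHom.apply_mem_spectrum f b)
    have hfe : f e = Complex.exp (-(f b)) := by
      rw [he, NormedSpace.map_exp f (map_continuous f), map_neg, Complex.exp_eq_exp_ℂ]
    have hnorm : ‖z‖ ≤ Real.exp (-δ) := by
      rw [← hf, hfe, Complex.norm_exp]
      apply Real.exp_le_exp.mpr
      simp only [Complex.neg_re]
      linarith
    have h1 : ‖z‖₊ ≤ r := by
      rw [hr, ← norm_toNNReal]
      exact Real.toNNReal_mono hnorm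
    exact_mod_cast h1
  have hrad : spectralRadius ℂ e < 1 := by
    have h1 : spectralRadius ℂ e ≤ (r : ENNReal) := by
      rw [spectralRadius]
      exact iSup₂_le hspec
    have h2 : (r : ENNReal) < 1 := by
      rw [hr]
      have h3 : Real.exp (-δ) < 1 := Real.exp_lt_one_iff.mpr (by linarith)
      exact_mod_cast Real.toNNReal_lt_one.mpr h3
    exact lt_of_le_of_lt h1 h2
  have htend := spectrum.pow_nnnorm_pow_one_div_tendsto_nhds_spectralRadius e
  have hev := htend.eventually_lt_const hrad
  filter_upwards [hev, Filter.eventually_ge_atTop 1] with n hn hn1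
  have hlt : (‖e ^ n‖₊ : ENNReal) < 1 := by
    by_contra hge
    push_neg at hge
    have h1n : (0:ℝ) ≤ 1 / (n : ℝ) := by positivity
    have h4 := ENNReal.rpow_le_rpow hge h1n
    rw [ENNReal.one_rpow] at h4
    exact absurd (lt_of_le_of_lt h4 hn) (lt_irrefl _)
  have h5 : ‖e ^ n‖₊ < 1 := by exact_mod_cast hlt
  have hn' : ‖e ^ n‖ < 1 := h5
  calc ‖(NormedSpace.exp (-a)) ^ n‖ = ‖((e ^ n : B) : A)‖ := by
        rw [SubmonoidClass.coe_pow, hcoe_e]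
    _ = ‖e ^ n‖ := rfl
    _ < 1 := hn'

end Aux

theorem stmt8 {H : Type*} [NormedAddCommGroup H] [InnerProductSpace ℂ H] [CompleteSpace H]
    (S P Q : H →L[ℂ] H) (hS : IsUnit S)
    (hsS : ∀ z ∈ spectrum ℂ S, z ≠ 0 ∧ |z.arg| < Real.pi / 2)
    (hP : P ∘L P = S) (hQ : Q ∘L Q = S)
    (hsP : ∀ z ∈ spectrum ℂ P, z ≠ 0 ∧ |z.arg| < Real.pi / 4)
    (hsQ : ∀ z ∈ spectrum ℂ Q, z ≠ 0 ∧ |z.arg| < Real.pi / 4) :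
    P = Q := by
  rcases subsingleton_or_nontrivial H with hH | hH
  · ext x
    exact Subsingleton.elim _ _
  obtain ⟨δ₁, hδ₁pos, hδ₁⟩ := my_exists_pos_re_bound P hsP
  obtain ⟨δ₂, hδ₂pos, hδ₂⟩ := my_exists_pos_re_bound Q hsQ
  have hPP : P * P = Q * Q := by rw [mul_def, mul_def, hP, hQ]
  set D := P - Q with hD
  have hcomm : (-P) * D = D * Q := by
    rw [hD, neg_mul, mul_sub, neg_sub, hPP, sub_mul]
  have hint : NormedSpace.exp (-P) * D = D * NormedSpace.exp Q :=
    my_intertwine_exp _ _ _ hcomm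
  letI : NormedAlgebra ℚ (H →L[ℂ] H) := .restrictScalars ℚ ℂ (H →L[ℂ] H)
  have hfix : NormedSpace.exp (-P) * D * NormedSpace.exp (-Q) = D := by
    rw [hint, mul_assoc, ← NormedSpace.exp_add_of_commute ((Commute.refl Q).neg_right),
      add_neg_cancel, NormedSpace.exp_zero, mul_one]
  have hiter : ∀ n : ℕ,
      (NormedSpace.exp (-P)) ^ n * D * (NormedSpace.exp (-Q)) ^ n = D := by
    intro n; induction n with
    | zero => simp
    | succ n ih =>
      set x := NormedSpace.exp (-P)
      set y := NormedSpace.exp (-Q)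
      rw [pow_succ, pow_succ', mul_assoc (x ^ n) x D, mul_assoc (x ^ n) (x * D),
        ← mul_assoc (x * D) y (y ^ n), hfix, ← mul_assoc]
      exact ih
  have h1 := my_eventually_norm_lt P δ₁ hδ₁pos hδ₁
  have h2 := my_eventually_norm_lt Q δ₂ hδ₂pos hδ₂
  obtain ⟨n, hn1, hn2⟩ := (h1.and h2).exists
  have hDle : ‖D‖ ≤ ‖(NormedSpace.exp (-P)) ^ n‖ * ‖D‖ * ‖(NormedSpace.exp (-Q)) ^ n‖ := by
    conv_lhs => rw [← hiter n]
    exact le_trans (norm_mul_le _ _)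
      (mul_le_mul_of_nonneg_right (norm_mul_le _ _) (norm_nonneg _))
  have hDzero : ‖D‖ = 0 := by
    by_contra h
    have hpos : 0 < ‖D‖ := lt_of_le_of_ne (norm_nonneg _) (Ne.symm h)
    nlinarith [mul_le_mul_of_nonneg_right
        (mul_le_mul_of_nonneg_right hn1.le hpos.le)
        (norm_nonneg ((NormedSpace.exp (-Q)) ^ n)),
      mul_lt_mul_of_pos_left hn2 hpos]
  have : D = 0 := norm_eq_zero.mp hDzero
  exact sub_eq_zero.mp this
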